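/- Let ν > 0, λ ∈ ℝ, and let v : (0,1] → ℂ be a bounded C² solution of -v'' - (1/r) v' + (ν²/r²) v = λ v on (0,1]. Write v in the representation v(r) = r^{ν}(c₁ + (λ/(2ν)) ∫_r^1 s^{1-ν} v ds) + r^{-ν}(c₂ - (λ/(2ν)) ∫_r^1 s^{1+ν} v ds). If moreover |v(r)| ≤ C r^{γ} for some C > 0 and γ > 0 and all r ∈ (0,1], then necessarily c₂ = (λ/(2ν)) ∫_0^1 s^{1+ν} v(s) ds; that is, the coefficient of the singular part vanishes in the sense that r^{-ν}(c₂ - (λ/(2ν)) ∫_r^1 s^{1+ν} v ds) → 0 as r → 0⁺. -/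

import Mathlib

open Set MeasureTheory intervalIntegral Filter Topology

private lemma tendsto_rpow_zero' {p : ℝ} (hp : 0 < p) :
    Tendsto (fun r : ℝ => r ^ p) (𝓝[>] (0:ℝ)) (𝓝 0) := by
  have h := (Real.continuousAt_rpow_const 0 p (Or.inr hp.le)).tendsto
  rw [Real.zero_rpow hp.ne'] at h
  exact h.mono_left nhdsWithin_le_nhds

/-- If a bounded `C²` solution of the Bessel-type ODE, written in the representation
`v(r) = r^ν (c₁ + (λ/(2ν)) ∫_r^1 s^{1-ν} v ds) + r^{-ν} (c₂ - (λ/(2ν)) ∫_r^1 s^{1+ν} v ds)`,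
satisfies `|v(r)| ≤ C r^γ` with `C, γ > 0`, then necessarily
`c₂ = (λ/(2ν)) ∫_0^1 s^{1+ν} v ds`, i.e. the singular part tends to `0` as `r → 0⁺`. -/
theorem singular_coefficient_vanishes (ν lam : ℝ) (hν : 0 < ν) (v v' v'' : ℝ → ℂ)
    (c₁ c₂ : ℂ)
    (hcont : ContinuousOn v (Set.Ioc (0:ℝ) 1))
    (hv : ∀ r ∈ Set.Ioc (0:ℝ) 1, HasDerivAt v (v' r) r)
    (hv' : ∀ r ∈ Set.Ioc (0:ℝ) 1, HasDerivAt v' (v'' r) r)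
    (hode : ∀ r ∈ Set.Ioc (0:ℝ) 1,
      -(v'' r) - (1/(r:ℂ)) * v' r + (((ν^2 : ℝ) : ℂ)/(r:ℂ)^2) * v r = (lam:ℂ) * v r)
    (hrep : ∀ r ∈ Set.Ioc (0:ℝ) 1,
      v r = ((r ^ ν : ℝ) : ℂ) *
              (c₁ + ((lam/(2*ν) : ℝ) : ℂ) * ∫ s in r..1, ((s ^ (1 - ν) : ℝ) : ℂ) * v s)
          + ((r ^ (-ν) : ℝ) : ℂ) *
              (c₂ - ((lam/(2*ν) : ℝ) : ℂ) * ∫ s in r..1, ((s ^ (1 + ν) : ℝ) : ℂ) * v s))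
    (C γ : ℝ) (hC : 0 < C) (hγ : 0 < γ)
    (hbd : ∀ r ∈ Set.Ioc (0:ℝ) 1, ‖v r‖ ≤ C * r ^ γ) :
    c₂ = ((lam/(2*ν) : ℝ) : ℂ) * ∫ s in (0:ℝ)..1, ((s ^ (1 + ν) : ℝ) : ℂ) * v s ∧
    Tendsto (fun r : ℝ => ((r ^ (-ν) : ℝ) : ℂ) *
        (c₂ - ((lam/(2*ν) : ℝ) : ℂ) * ∫ s in r..1, ((s ^ (1 + ν) : ℝ) : ℂ) * v s))
      (𝓝[>] (0:ℝ)) (𝓝 0) := by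
  set K : ℂ := ((lam/(2*ν) : ℝ) : ℂ) with hK
  set f : ℝ → ℂ := fun s => ((s ^ (1 + ν) : ℝ) : ℂ) * v s with hf
  set g : ℝ → ℂ := fun s => ((s ^ (1 - ν) : ℝ) : ℂ) * v s with hg
  have hmem : Set.Ioo (0:ℝ) 1 ∈ 𝓝[>] (0:ℝ) :=
    Ioo_mem_nhdsGT_of_mem ⟨le_refl 0, zero_lt_one⟩
  -- bound on f
  have hfbd : ∀ s ∈ Set.Ioc (0:ℝ) 1, ‖f s‖ ≤ C := by
    intro s hs
    have hs1 : s ^ (1 + ν) ≤ 1 := Real.rpow_le_one hs.1.le hs.2 (by positivity)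
    have hs2 : s ^ γ ≤ 1 := Real.rpow_le_one hs.1.le hs.2 hγ.le
    have : ‖f s‖ = s ^ (1 + ν) * ‖v s‖ := by
      rw [hf]; simp [norm_mul, Complex.norm_real, abs_of_nonneg (Real.rpow_nonneg hs.1.le _)]
    rw [this]
    calc s ^ (1 + ν) * ‖v s‖ ≤ 1 * (C * s ^ γ) :=
          mul_le_mul hs1 (hbd s hs) (norm_nonneg _) zero_le_one
      _ = C * s ^ γ := one_mul _
      _ ≤ C * 1 := by nlinarith
      _ = C := mul_one _
  -- continuity of f on Ioc 0 1
  have hfc : ContinuousOn f (Set.Ioc (0:ℝ) 1) := by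
    apply ContinuousOn.mul _ hcont
    apply Complex.continuous_ofReal.comp_continuousOn
    intro s hs
    exact (Real.continuousAt_rpow_const s _ (Or.inl hs.1.ne')).continuousWithinAt
  -- integrability of f on Ioc 0 1
  have hfi : IntegrableOn f (Set.Ioc (0:ℝ) 1) volume := by
    apply Integrable.mono' (g := fun _ => C)
      (integrableOn_const measure_Ioc_lt_top.ne)
      (hfc.aestronglyMeasurable measurableSet_Ioc)
    exact (ae_restrict_iff' measurableSet_Ioc).2 (ae_of_all _ hfbd)
  have hfII : IntervalIntegrable f volume 0 1 := by
    rw [intervalIntegrable_iff, uIoc_of_le zero_le_one]; exact hfi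
  have hfIIl : ∀ r ∈ Set.Ioc (0:ℝ) 1, IntervalIntegrable f volume 0 r := by
    intro r hr
    rw [intervalIntegrable_iff, uIoc_of_le hr.1.le]
    exact hfi.mono_set (Ioc_subset_Ioc le_rfl hr.2)
  have hfIIr : ∀ r ∈ Set.Ioc (0:ℝ) 1, IntervalIntegrable f volume r 1 := by
    intro r hr
    rw [intervalIntegrable_iff, uIoc_of_le hr.2]
    exact hfi.mono_set (Ioc_subset_Ioc hr.1.le le_rfl)
  -- limit of ∫ r..1 f as r → 0+
  have hJlim : Tendsto (fun r => ∫ s in r..1, f s) (𝓝[>] (0:ℝ))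
      (𝓝 (∫ s in (0:ℝ)..1, f s)) := by
    have hev : ∀ᶠ r in 𝓝[>] (0:ℝ),
        (∫ s in (0:ℝ)..1, f s) - (∫ s in (0:ℝ)..r, f s) = ∫ s in r..1, f s := by
      filter_upwards [hmem] with r hr
      have hr' : r ∈ Set.Ioc (0:ℝ) 1 := ⟨hr.1, hr.2.le⟩
      rw [← integral_add_adjacent_intervals (hfIIl r hr') (hfIIr r hr')]
      ring
    have h0 : Tendsto (fun r => ∫ s in (0:ℝ)..r, f s) (𝓝[>] (0:ℝ)) (𝓝 0) := by
      apply squeeze_zero_norm' (a := fun r => C * r)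
      · filter_upwards [hmem] with r hr
        have : ∀ x ∈ Set.uIoc (0:ℝ) r, ‖f x‖ ≤ C := by
          rw [uIoc_of_le hr.1.le]
          intro x hx
          exact hfbd x ⟨hx.1, hx.2.trans hr.2.le⟩
        calc ‖∫ s in (0:ℝ)..r, f s‖ ≤ C * |r - 0| := norm_integral_le_of_norm_le_const this
          _ = C * r := by rw [sub_zero, abs_of_pos hr.1]
      · have : Tendsto (fun r : ℝ => C * r) (𝓝 (0:ℝ)) (𝓝 (C * 0)) :=
          (continuous_const.mul continuous_id).tendsto 0
        rw [mul_zero] at this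
        exact this.mono_left nhdsWithin_le_nhds
    have := (tendsto_const_nhds (x := ∫ s in (0:ℝ)..1, f s)).sub h0
    rw [sub_zero] at this
    exact Tendsto.congr' hev this
  -- bound on the other integral
  have hgbd : ∀ r ∈ Set.Ioo (0:ℝ) 1,
      ‖∫ s in r..1, g s‖ ≤ C * max (r ^ (1 - ν + γ)) 1 := by
    intro r hr
    have hb : ∀ x ∈ Set.uIoc r 1, ‖g x‖ ≤ C * max (r ^ (1 - ν + γ)) 1 := by
      rw [uIoc_of_le hr.2.le]
      intro x hx
      have hx0 : 0 < x := hr.1.trans hx.1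
      have h1 : ‖g x‖ = x ^ (1 - ν) * ‖v x‖ := by
        rw [hg]; simp [norm_mul, Complex.norm_real, abs_of_nonneg (Real.rpow_nonneg hx0.le _)]
      have h2 : x ^ (1 - ν) * ‖v x‖ ≤ x ^ (1 - ν) * (C * x ^ γ) :=
        mul_le_mul_of_nonneg_left (hbd x ⟨hx0, hx.2⟩) (Real.rpow_nonneg hx0.le _)
      have h3 : x ^ (1 - ν) * (C * x ^ γ) = C * x ^ (1 - ν + γ) := by
        rw [Real.rpow_add hx0]; ring
      have h4 : x ^ (1 - ν + γ) ≤ max (r ^ (1 - ν + γ)) 1 := by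
        rcases le_or_gt 0 (1 - ν + γ) with h | h
        · exact le_max_of_le_right (Real.rpow_le_one hx0.le hx.2 h)
        · exact le_max_of_le_left
            (Real.rpow_le_rpow_of_nonpos hr.1 hx.1.le h.le)
      calc ‖g x‖ = x ^ (1 - ν) * ‖v x‖ := h1
        _ ≤ C * x ^ (1 - ν + γ) := h2.trans_eq h3
        _ ≤ C * max (r ^ (1 - ν + γ)) 1 := by
            exact mul_le_mul_of_nonneg_left h4 hC.le
    calc ‖∫ s in r..1, g s‖ ≤ C * max (r ^ (1 - ν + γ)) 1 * |1 - r| :=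
          norm_integral_le_of_norm_le_const hb
      _ ≤ C * max (r ^ (1 - ν + γ)) 1 * 1 := by
          apply mul_le_mul_of_nonneg_left _ (by positivity)
          rw [abs_of_nonneg (by linarith [hr.2])]; linarith [hr.1]
      _ = C * max (r ^ (1 - ν + γ)) 1 := mul_one _
  -- v → 0
  have hv0 : Tendsto v (𝓝[>] (0:ℝ)) (𝓝 0) := by
    apply squeeze_zero_norm' (a := fun r => C * r ^ γ)
    · filter_upwards [hmem] with r hr
      exact hbd r ⟨hr.1, hr.2.le⟩
    · have := (tendsto_rpow_zero' hγ).const_mul C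
      rw [mul_zero] at this
      exact this
  -- the first-term part → 0
  have hterm2 : Tendsto (fun r : ℝ => ((r ^ ν : ℝ) : ℂ) *
      (c₁ + K * ∫ s in r..1, g s)) (𝓝[>] (0:ℝ)) (𝓝 0) := by
    apply squeeze_zero_norm'
      (a := fun r => r ^ ν * ‖c₁‖ + ‖K‖ * (C * max (r ^ (1 + γ)) (r ^ ν)))
    · filter_upwards [hmem] with r hr
      have hr0 : (0:ℝ) < r := hr.1
      have hrν : (0:ℝ) ≤ r ^ ν := Real.rpow_nonneg hr0.le _
      have hnorm : ‖((r ^ ν : ℝ) : ℂ) * (c₁ + K * ∫ s in r..1, g s)‖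
          = r ^ ν * ‖c₁ + K * ∫ s in r..1, g s‖ := by
        simp [norm_mul, Complex.norm_real, abs_of_nonneg hrν]
      rw [hnorm]
      have h1 : ‖c₁ + K * ∫ s in r..1, g s‖ ≤ ‖c₁‖ + ‖K‖ * ‖∫ s in r..1, g s‖ := by
        calc ‖c₁ + K * ∫ s in r..1, g s‖ ≤ ‖c₁‖ + ‖K * ∫ s in r..1, g s‖ := norm_add_le _ _
          _ = ‖c₁‖ + ‖K‖ * ‖∫ s in r..1, g s‖ := by rw [norm_mul]
      have h2 : r ^ ν * ‖∫ s in r..1, g s‖ ≤ C * max (r ^ (1 + γ)) (r ^ ν) := by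
        have := mul_le_mul_of_nonneg_left (hgbd r hr) hrν
        calc r ^ ν * ‖∫ s in r..1, g s‖ ≤ r ^ ν * (C * max (r ^ (1 - ν + γ)) 1) := this
          _ = C * (r ^ ν * max (r ^ (1 - ν + γ)) 1) := by ring
          _ = C * max (r ^ ν * r ^ (1 - ν + γ)) (r ^ ν * 1) := by
              rw [mul_max_of_nonneg _ _ hrν]
          _ = C * max (r ^ (1 + γ)) (r ^ ν) := by
              have hx : ν + (1 - ν + γ) = 1 + γ := by ring
              rw [mul_one, ← Real.rpow_add hr0, hx]
          _ = C * max (r ^ (1 + γ)) (r ^ ν) := rfl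
      calc r ^ ν * ‖c₁ + K * ∫ s in r..1, g s‖
          ≤ r ^ ν * (‖c₁‖ + ‖K‖ * ‖∫ s in r..1, g s‖) :=
            mul_le_mul_of_nonneg_left h1 hrν
        _ = r ^ ν * ‖c₁‖ + ‖K‖ * (r ^ ν * ‖∫ s in r..1, g s‖) := by ring
        _ ≤ r ^ ν * ‖c₁‖ + ‖K‖ * (C * max (r ^ (1 + γ)) (r ^ ν)) := by
            have := mul_le_mul_of_nonneg_left h2 (norm_nonneg K)
            linarith
    · have t1 := (tendsto_rpow_zero' hν).mul_const ‖c₁‖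
      rw [zero_mul] at t1
      have t2 : Tendsto (fun r : ℝ => max (r ^ (1 + γ)) (r ^ ν)) (𝓝[>] (0:ℝ)) (𝓝 0) := by
        have := (tendsto_rpow_zero' (by linarith : (0:ℝ) < 1 + γ)).max (tendsto_rpow_zero' hν)
        rwa [max_self] at this
      have t3 := ((t2.const_mul C).const_mul ‖K‖)
      rw [mul_zero, mul_zero] at t3
      have := t1.add t3
      rwa [add_zero] at this
  -- the singular part → 0
  have hG : Tendsto (fun r : ℝ => ((r ^ (-ν) : ℝ) : ℂ) *
      (c₂ - K * ∫ s in r..1, f s)) (𝓝[>] (0:ℝ)) (𝓝 0) := by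
    have hev : ∀ᶠ r in 𝓝[>] (0:ℝ),
        v r - ((r ^ ν : ℝ) : ℂ) * (c₁ + K * ∫ s in r..1, g s)
        = ((r ^ (-ν) : ℝ) : ℂ) * (c₂ - K * ∫ s in r..1, f s) := by
      filter_upwards [hmem] with r hr
      rw [hrep r ⟨hr.1, hr.2.le⟩]
      ring
    have := hv0.sub hterm2
    rw [sub_zero] at this
    exact Tendsto.congr' hev this
  refine ⟨?_, hG⟩
  -- deduce the value of c₂
  have h1 : Tendsto (fun r : ℝ => c₂ - K * ∫ s in r..1, f s) (𝓝[>] (0:ℝ))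
      (𝓝 (c₂ - K * ∫ s in (0:ℝ)..1, f s)) :=
    tendsto_const_nhds.sub (hJlim.const_mul K)
  have h2 : Tendsto (fun r : ℝ => c₂ - K * ∫ s in r..1, f s) (𝓝[>] (0:ℝ)) (𝓝 0) := by
    have hcast : Tendsto (fun r : ℝ => ((r ^ ν : ℝ) : ℂ)) (𝓝[>] (0:ℝ)) (𝓝 0) := by
      have := Complex.continuous_ofReal.tendsto 0
      rw [Complex.ofReal_zero] at this
      exact this.comp (tendsto_rpow_zero' hν)
    have hprod := hcast.mul hG
    rw [zero_mul] at hprod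
    apply Tendsto.congr' _ hprod
    filter_upwards [hmem] with r hr
    have hr0 : (0:ℝ) < r := hr.1
    have : ((r ^ ν : ℝ) : ℂ) * ((r ^ (-ν) : ℝ) : ℂ) = 1 := by
      rw [← Complex.ofReal_mul, ← Real.rpow_add hr0]
      norm_num
    rw [← mul_assoc, this, one_mul]
  have := tendsto_nhds_unique h1 h2
  have h3 : c₂ - K * ∫ s in (0:ℝ)..1, f s = 0 := this
  linear_combination h3
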